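/- arXiv:1706.00908 — 6 statements merged into one kernel-verified Lean document; each statement's English description precedes it below -/
import Mathlib

section
/- Let n ≥ 2, let δ ∈ (0,1) and ε ∈ (0,1), let D be an n×n diagonal matrix with diagonal entries d_1,…,d_n ∈ [0,1], and let A_ε := δI + (1−δ)𝟏𝟏^T + εD, with f(x) := (1/2)·x^T A_ε x. Fix an index i ∈ {1,…,n} and a starting point x⁰ ∈ ℝⁿ, and let x¹ be the result of one exact-line-search coordinate-descent step on f in coordinate i, i.e. x¹_i = −((1−δ)/(1+ε d_i))·∑_{j≠i} x⁰_j and x¹_j = x⁰_j for j ≠ i. Then f(x¹) ≤ (1/2)·∑_{j≠i} (x⁰_j)²·(δ + ε d_j) + ((1−δ)(δ+ε)/(2(1+ε)))·(∑_{j≠i} x⁰_j)². -/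
open Matrix Finset

lemma quad_expand (n : ℕ) (δ ε : ℝ) (d : Fin n → ℝ) (x : Fin n → ℝ) :
    x ⬝ᵥ ((δ • (1 : Matrix (Fin n) (Fin n) ℝ)
        + (1 - δ) • Matrix.vecMulVec (fun _ => 1) (fun _ => 1)
        + ε • Matrix.diagonal d).mulVec x)
      = δ * ∑ j, (x j)^2 + (1-δ) * (∑ j, x j)^2 + ε * ∑ j, d j * (x j)^2 := by
  simp [Matrix.mulVec, dotProduct, Matrix.add_apply, Matrix.smul_apply, Matrix.one_apply,
    Matrix.diagonal_apply, Matrix.vecMulVec_apply, mul_add, add_mul, Finset.sum_add_distrib,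
    Finset.mul_sum, Finset.sum_mul, mul_ite, ite_mul, Finset.sum_ite_eq, Finset.sum_ite_eq',
    sq]
  rw [show ∀ a b c a2 b2 c2 : ℝ, a=a2 → b=b2 → c=c2 → a+b+c = a2+b2+c2 from
    fun _ _ _ _ _ _ h1 h2 h3 => by rw [h1,h2,h3]]
  · exact Finset.sum_congr rfl fun j _ => by ring
  · exact Finset.sum_congr rfl fun j _ => Finset.sum_congr rfl fun k _ => by ring
  · exact Finset.sum_congr rfl fun j _ => by ring

theorem first_iteration_decrease
    (n : ℕ) (hn : 2 ≤ n) (δ ε : ℝ) (hδ : 0 < δ ∧ δ < 1) (hε : 0 < ε ∧ ε < 1)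
    (d : Fin n → ℝ) (hd : ∀ j, 0 ≤ d j ∧ d j ≤ 1)
    (A : Matrix (Fin n) (Fin n) ℝ)
    (hA : A = δ • (1 : Matrix (Fin n) (Fin n) ℝ)
        + (1 - δ) • Matrix.vecMulVec (fun _ => 1) (fun _ => 1)
        + ε • Matrix.diagonal d)
    (f : (Fin n → ℝ) → ℝ) (hf : ∀ x, f x = (1/2) * (x ⬝ᵥ A.mulVec x))
    (i : Fin n) (x0 x1 : Fin n → ℝ)
    (hx1 : x1 = Function.update x0 i
        (-((1 - δ) / (1 + ε * d i)) * ∑ j ∈ Finset.univ.erase i, x0 j)) :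
    f x1 ≤ (1/2) * ∑ j ∈ Finset.univ.erase i, (x0 j)^2 * (δ + ε * d j)
      + ((1 - δ) * (δ + ε) / (2 * (1 + ε))) * (∑ j ∈ Finset.univ.erase i, x0 j)^2 := by
  obtain ⟨hδ0, hδ1⟩ := hδ
  obtain ⟨hε0, hε1⟩ := hε
  set S := ∑ j ∈ Finset.univ.erase i, x0 j with hS
  set b := ε * d i with hb
  have hb0 : 0 ≤ b := mul_nonneg hε0.le (hd i).1
  have hbε : b ≤ ε := by
    have := (hd i).2
    nlinarith
  have h1b : 0 < 1 + b := by linarith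
  have h1ε : (0:ℝ) < 1 + ε := by linarith
  set t := -((1 - δ) / (1 + b)) * S with ht
  have hx1i : x1 i = t := by rw [hx1]; simp
  have hx1j : ∀ j ∈ Finset.univ.erase i, x1 j = x0 j := by
    intro j hj
    rw [hx1, Function.update_of_ne (Finset.ne_of_mem_erase hj)]
  have hmem : i ∈ (Finset.univ : Finset (Fin n)) := Finset.mem_univ i
  -- split each sum over univ into erase i plus i
  have hsum1 : ∑ j, (x1 j)^2 = (∑ j ∈ Finset.univ.erase i, (x0 j)^2) + t^2 := by
    rw [← Finset.sum_erase_add _ _ hmem, hx1i]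
    congr 1
    exact Finset.sum_congr rfl fun j hj => by rw [hx1j j hj]
  have hsum2 : ∑ j, x1 j = S + t := by
    rw [← Finset.sum_erase_add _ _ hmem, hx1i, hS]
    congr 1
    exact Finset.sum_congr rfl fun j hj => hx1j j hj
  have hsum3 : ∑ j, d j * (x1 j)^2
      = (∑ j ∈ Finset.univ.erase i, d j * (x0 j)^2) + d i * t^2 := by
    rw [← Finset.sum_erase_add _ _ hmem, hx1i]
    congr 1
    exact Finset.sum_congr rfl fun j hj => by rw [hx1j j hj]
  have hfx1 : f x1 = (1/2) * (δ * ((∑ j ∈ Finset.univ.erase i, (x0 j)^2) + t^2)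
      + (1-δ) * (S + t)^2
      + ε * ((∑ j ∈ Finset.univ.erase i, d j * (x0 j)^2) + d i * t^2)) := by
    rw [hf, hA, quad_expand, hsum1, hsum2, hsum3]
  have hpart : (1/2) * (δ * (∑ j ∈ Finset.univ.erase i, (x0 j)^2)
      + ε * (∑ j ∈ Finset.univ.erase i, d j * (x0 j)^2))
      = (1/2) * ∑ j ∈ Finset.univ.erase i, (x0 j)^2 * (δ + ε * d j) := by
    rw [Finset.mul_sum, Finset.mul_sum, ← Finset.sum_add_distrib]
    congr 1
    exact Finset.sum_congr rfl fun j _ => by ring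
  -- key scalar identity
  have hkey : (δ + b) * t^2 + (1-δ) * (S + t)^2 = (1-δ) * (δ + b) / (1 + b) * S^2 := by
    rw [ht]
    field_simp
    ring
  have hineq : (1-δ) * (δ + b) / (1 + b) ≤ (1-δ) * (δ + ε) / (1 + ε) := by
    rw [div_le_div_iff₀ h1b h1ε]
    nlinarith [mul_nonneg (sub_nonneg.2 hbε) (sub_nonneg.2 hδ1.le)]
  have hS2 : (0:ℝ) ≤ S^2 := sq_nonneg S
  have hfx1' : f x1 = (1/2) * ∑ j ∈ Finset.univ.erase i, (x0 j)^2 * (δ + ε * d j)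
      + (1/2) * ((1-δ) * (δ + b) / (1 + b) * S^2) := by
    rw [hfx1, ← hpart, ← hkey]; ring
  rw [hfx1']
  have : (1/2) * ((1-δ) * (δ + b) / (1 + b) * S^2)
      ≤ ((1 - δ) * (δ + ε) / (2 * (1 + ε))) * S^2 := by
    have h2 : ((1 - δ) * (δ + ε) / (2 * (1 + ε))) = (1/2) * ((1-δ) * (δ + ε) / (1 + ε)) := by
      field_simp
    rw [h2]
    have := mul_le_mul_of_nonneg_right hineq hS2
    nlinarith
  linarith
end

section
/- Let n ≥ 2, let δ ∈ (0,1) and ε ∈ (0,1), let D be an n×n diagonal matrix with diagonal entries d_1,…,d_n ∈ [0,1], and let A_ε := δI + (1−δ)𝟏𝟏^T + εD, with f(x) := (1/2)·x^T A_ε x. For each i ∈ {1,…,n} and starting point x⁰ ∈ ℝⁿ let x¹(i) be the result of one exact-line-search coordinate-descent step on f in coordinate i, i.e. x¹(i)_i = −((1−δ)/(1+ε d_i))·∑_{j≠i} x⁰_j and x¹(i)_j = x⁰_j for j ≠ i. Then the average over i uniformly distributed in {1,…,n} satisfies (1/n)·∑_{i=1}^n f(x¹(i)) ≤ ((δ+ε)/(2n))·(n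 − (δ+ε)/(1+ε))·‖x⁰‖² + ((n−2)/n)·((1−δ)(δ+ε)/(1+ε))·(𝟏^T x⁰)². -/
open Matrix Finset

set_option maxHeartbeats 1000000 in
theorem expected_first_iteration_decrease
    (n : ℕ) (hn : 2 ≤ n) (δ ε : ℝ) (hδ : 0 < δ ∧ δ < 1) (hε : 0 < ε ∧ ε < 1)
    (d : Fin n → ℝ) (hd : ∀ j, 0 ≤ d j ∧ d j ≤ 1)
    (A : Matrix (Fin n) (Fin n) ℝ)
    (hA : A = δ • (1 : Matrix (Fin n) (Fin n) ℝ)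
        + (1 - δ) • Matrix.vecMulVec (fun _ => 1) (fun _ => 1)
        + ε • Matrix.diagonal d)
    (f : (Fin n → ℝ) → ℝ) (hf : ∀ x, f x = (1/2) * (x ⬝ᵥ A.mulVec x))
    (x0 : Fin n → ℝ) (x1 : Fin n → (Fin n → ℝ))
    (hx1 : ∀ i, x1 i = Function.update x0 i
        (-((1 - δ) / (1 + ε * d i)) * ∑ j ∈ Finset.univ.erase i, x0 j)) :
    (1 / (n : ℝ)) * ∑ i, f (x1 i)
      ≤ ((δ + ε) / (2 * (n : ℝ))) * ((n : ℝ) - (δ + ε) / (1 + ε)) * (∑ j, (x0 j)^2)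
        + (((n : ℝ) - 2) / (n : ℝ)) * ((1 - δ) * (δ + ε) / (1 + ε)) * (∑ j, x0 j)^2 := by
  obtain ⟨hδ0, hδ1⟩ := hδ
  obtain ⟨hε0, hε1⟩ := hε
  have h1ε : (0:ℝ) < 1 + ε := by linarith
  set N : ℝ := (n : ℝ) with hN
  have hN2 : (2:ℝ) ≤ N := by rw [hN]; exact_mod_cast hn
  have hN0 : (0:ℝ) < N := by linarith
  -- the quadratic form
  have hq : ∀ x : Fin n → ℝ, f x
      = (1/2) * (δ * ∑ j, (x j)^2 + (1-δ) * (∑ j, x j)^2 + ε * ∑ j, d j * (x j)^2) := by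
    intro x
    rw [hf]
    congr 1
    have hm : A.mulVec x = fun i => δ * x i + (1-δ) * (∑ j, x j) + ε * (d i * x i) := by
      funext i
      subst hA
      simp [Matrix.mulVec, dotProduct, Matrix.one_apply, Matrix.vecMulVec_apply,
        Matrix.diagonal_apply, add_mul, Finset.sum_add_distrib, Finset.mul_sum,
        ite_mul, Finset.sum_ite_eq]
      ring
    rw [hm]
    simp only [dotProduct]
    have h1 : ∀ i : Fin n, x i * (δ * x i + (1-δ) * (∑ j, x j) + ε * (d i * x i))
        = δ * (x i)^2 + ((1-δ) * (∑ j, x j)) * x i + ε * (d i * (x i)^2) := by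
      intro i; ring
    rw [Finset.sum_congr rfl (fun i _ => h1 i)]
    rw [Finset.sum_add_distrib, Finset.sum_add_distrib, ← Finset.mul_sum, ← Finset.mul_sum,
      ← Finset.mul_sum]
    ring
  set s := ∑ j, x0 j with hs
  set S := ∑ j, (x0 j)^2 with hS
  set T := ∑ j, d j * (x0 j)^2 with hT
  set K := (1 - δ) * (δ + ε) / (1 + ε) with hK
  have hK0 : 0 ≤ K := by
    rw [hK]
    apply div_nonneg _ (le_of_lt h1ε)
    apply mul_nonneg <;> linarith
  have hS0 : 0 ≤ S := by rw [hS]; exact Finset.sum_nonneg (fun j _ => sq_nonneg _)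
  -- per-coordinate bound
  have key : ∀ i : Fin n, f (x1 i) ≤ (δ+ε)/2 * (S - (x0 i)^2) + K/2 * (s - x0 i)^2 := by
    intro i
    have hmem : i ∈ (Finset.univ : Finset (Fin n)) := Finset.mem_univ i
    have ht : ∑ j ∈ Finset.univ.erase i, x0 j = s - x0 i := by
      have h := Finset.sum_erase_add Finset.univ x0 hmem
      rw [← hs] at h; linarith
    have htS : ∑ j ∈ Finset.univ.erase i, (x0 j)^2 = S - (x0 i)^2 := by
      have h := Finset.sum_erase_add Finset.univ (fun j => (x0 j)^2) hmem
      rw [← hS] at h; linarith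
    have htT : ∑ j ∈ Finset.univ.erase i, d j * (x0 j)^2 = T - d i * (x0 i)^2 := by
      have h := Finset.sum_erase_add Finset.univ (fun j => d j * (x0 j)^2) hmem
      rw [← hT] at h; linarith
    set a := 1 + ε * d i with ha
    have ha0 : 0 < a := by
      have h0 : 0 ≤ ε * d i := mul_nonneg (le_of_lt hε0) (hd i).1
      rw [ha]; linarith
    set t := s - x0 i with htt
    set c := -((1 - δ) / a) * t with hc
    have hx1i : x1 i = Function.update x0 i c := by
      rw [hx1 i, ht]
    -- sums over updated vector
    have hsum1 : ∑ j, x1 i j = c + t := by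
      rw [hx1i, Finset.sum_update_of_mem hmem, ← Finset.erase_eq, ht]
    have hsum2 : ∑ j, (x1 i j)^2 = c^2 + (S - (x0 i)^2) := by
      rw [hx1i]
      have h2 : ∀ j, (Function.update x0 i c j)^2
          = Function.update (fun j => (x0 j)^2) i (c^2) j := by
        intro j
        exact Function.apply_update (fun _ y => y^2) x0 i c j
      rw [Finset.sum_congr rfl (fun j _ => h2 j), Finset.sum_update_of_mem hmem,
        ← Finset.erase_eq, htS]
    have hsum3 : ∑ j, d j * (x1 i j)^2 = d i * c^2 + (T - d i * (x0 i)^2) := by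
      rw [hx1i]
      have h3 : ∀ j, d j * (Function.update x0 i c j)^2
          = Function.update (fun j => d j * (x0 j)^2) i (d i * c^2) j := by
        intro j
        exact Function.apply_update (fun j y => d j * y^2) x0 i c j
      rw [Finset.sum_congr rfl (fun j _ => h3 j), Finset.sum_update_of_mem hmem,
        ← Finset.erase_eq, htT]
    rw [hq (x1 i), hsum1, hsum2, hsum3]
    have hane : a ≠ 0 := ne_of_gt ha0
    have hca : c + t = (δ + ε * d i)/a * t := by
      rw [hc]; field_simp; ring
    rw [hca]
    clear_value S T s
    have hane2 : a ≠ 0 := hane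
    -- exact quadratic identity in c
    have hiden : δ * c^2 + ε * (d i * c^2) + (1-δ) * ((δ + ε * d i)/a * t)^2
        = (1-δ) * (δ + ε * d i) / a * t^2 := by
      rw [hc]
      field_simp
      ring
    clear_value t c a
    -- bound T part
    have hTb : ε * (T - d i * (x0 i)^2) ≤ ε * (S - (x0 i)^2) := by
      apply mul_le_mul_of_nonneg_left _ (le_of_lt hε0)
      rw [← htT, ← htS]
      apply Finset.sum_le_sum
      intro j _
      nlinarith [(hd j).1, (hd j).2, sq_nonneg (x0 j)]
    -- bound ratio
    have hrb : (1-δ) * (δ + ε * d i) / a ≤ K := by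
      have ha0' : (0:ℝ) < 1 + ε * d i := ha ▸ ha0
      rw [hK, ha, div_le_div_iff₀ ha0' h1ε]
      have h4 : 0 ≤ (1-δ)*(1-δ)*ε*(1 - d i) := by
        have := (hd i).2
        apply mul_nonneg
        apply mul_nonneg
        apply mul_nonneg <;> linarith
        linarith
        linarith
      have h5 : (1-δ)*(δ+ε)*(1 + ε * d i) - (1-δ)*(δ + ε * d i)*(1+ε)
          = (1-δ)*(1-δ)*ε*(1 - d i) := by ring
      linarith [h4, h5]
    have hrbt : (1-δ) * (δ + ε * d i) / a * t^2 ≤ K * t^2 :=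
      mul_le_mul_of_nonneg_right hrb (sq_nonneg t)
    linarith [hiden, hTb, hrbt]
  -- sum the bounds
  clear_value K
  have hsumt : ∑ i, (s - x0 i)^2 = N * s^2 - 2*s^2 + S := by
    have h5 : ∀ i : Fin n, (s - x0 i)^2 = s^2 - (2*s) * x0 i + (x0 i)^2 := by
      intro i; ring
    rw [Finset.sum_congr rfl (fun i _ => h5 i), Finset.sum_add_distrib,
      Finset.sum_sub_distrib, ← Finset.mul_sum, Finset.sum_const, Finset.card_univ,
      Fintype.card_fin, ← hs, ← hS, hN]
    ring
  have hsum : ∑ i, f (x1 i) ≤ (δ+ε)/2 * (N*S - S) + K/2 * (N * s^2 - 2*s^2 + S) := by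
    calc ∑ i, f (x1 i) ≤ ∑ i : Fin n, ((δ+ε)/2 * (S - (x0 i)^2) + K/2 * (s - x0 i)^2) :=
          Finset.sum_le_sum (fun i _ => key i)
      _ = (δ+ε)/2 * (N*S - S) + K/2 * (N * s^2 - 2*s^2 + S) := by
          rw [Finset.sum_add_distrib, ← Finset.mul_sum, ← Finset.mul_sum, hsumt,
            Finset.sum_sub_distrib, Finset.sum_const, Finset.card_univ, Fintype.card_fin,
            ← hS, hN]
          ring
  clear_value S s N
  have hNne : N ≠ 0 := ne_of_gt hN0
  have h1εne : (1:ℝ) + ε ≠ 0 := ne_of_gt h1ε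
  -- final comparison
  have hRHS : N * (((δ + ε) / (2 * N)) * (N - (δ + ε) / (1 + ε)) * S
        + ((N - 2) / N) * K * s^2)
      = ((δ+ε)*(N-1) + K)/2 * S + (N-2) * K * s^2 := by
    rw [hK]
    field_simp
    ring
  have hB : (δ+ε)/2 * (N*S - S) + K/2 * (N * s^2 - 2*s^2 + S)
      ≤ ((δ+ε)*(N-1) + K)/2 * S + (N-2) * K * s^2 := by
    have hKeq : (δ+ε)*(N-1) + K = (δ+ε)*(N-1) + K := rfl
    have hKc : (δ + ε) * (1 + ε) - (δ + ε) * (δ + ε) = (1 - δ) * (δ + ε) + ε * (δ + ε) - ε * (δ + ε) + 0 := by ring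
    have hKval : K * (1 + ε) = (1 - δ) * (δ + ε) := by
      rw [hK]; field_simp
    nlinarith [mul_nonneg (mul_nonneg hK0 (by linarith : (0:ℝ) ≤ N - 2)) (sq_nonneg s)]
  rw [div_mul_eq_mul_div, div_le_iff₀ hN0]
  calc 1 * ∑ i, f (x1 i) = ∑ i, f (x1 i) := one_mul _
    _ ≤ ((δ+ε)*(N-1) + K)/2 * S + (N-2) * K * s^2 :=
        le_trans hsum hB
    _ = N * (((δ + ε) / (2 * N)) * (N - (δ + ε) / (1 + ε)) * S
        + ((N - 2) / N) * K * s^2) := hRHS.symm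
    _ = (((δ + ε) / (2 * N)) * (N - (δ + ε) / (1 + ε)) * S
        + ((N - 2) / N) * K * s^2) * N := by ring
end

section
/- Let n ≥ 2, let F be the n×n matrix with F_{i,i+1} = 1 for i = 1,…,n−1 and all other entries 0, and let D be an n×n diagonal matrix with diagonal vector d := D𝟏 and d_av := 𝟏^T d / n. Then the average over all n! permutation matrices P satisfies (1/n!)·∑_{P} P F^T P^T D P e₁ = (1/(n−1))·( d_av·𝟏 − (1/n)·d ). -/
open Matrix Finset

/-- The matrix with ones on the superdiagonal. -/
def matF (n : ℕ) : Matrix (Fin n) (Fin n) ℝ :=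
  Matrix.of fun i j => if (i : ℕ) + 1 = (j : ℕ) then 1 else 0

/-- The permutation matrix `P` of `σ`, satisfying `P e_j = e_{σ j}`. -/
def permMat {n : ℕ} (σ : Equiv.Perm (Fin n)) : Matrix (Fin n) (Fin n) ℝ :=
  Matrix.of fun i j => if i = σ j then 1 else 0

lemma permMat_mulVec_single {n : ℕ} (σ : Equiv.Perm (Fin n)) (j : Fin n) (c : ℝ) :
    (permMat σ).mulVec (Pi.single j c) = Pi.single (σ j) c := by
  ext i
  simp [permMat, Pi.single_apply, eq_comm]

lemma permMat_transpose_mulVec_single {n : ℕ} (σ : Equiv.Perm (Fin n)) (j : Fin n) (c : ℝ) :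
    (permMat σ)ᵀ.mulVec (Pi.single j c) = Pi.single (σ⁻¹ j) c := by
  ext i
  simp [permMat, Pi.single_apply, transpose_apply]
  congr 1
  rw [eq_iff_iff]
  constructor <;> intro h <;> simp [h]

lemma matF_transpose_mulVec_single {m : ℕ} (c : ℝ) :
    (matF (m+2))ᵀ.mulVec (Pi.single (0 : Fin (m+2)) c) = Pi.single (1 : Fin (m+2)) c := by
  ext i
  simp [matF, Pi.single_apply, transpose_apply]
  congr 1
  rw [eq_iff_iff]
  constructor <;> intro h
  · exact Fin.ext (by simpa using h.symm)
  · subst h; rfl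

lemma term_eq {m : ℕ} (d : Fin (m+2) → ℝ) (σ : Equiv.Perm (Fin (m+2))) :
    (permMat σ * (matF (m+2))ᵀ * (permMat σ)ᵀ * Matrix.diagonal d * permMat σ).mulVec
        (Pi.single (0 : Fin (m+2)) 1)
      = Pi.single (σ 1) (d (σ 0)) := by
  rw [show permMat σ * (matF (m+2))ᵀ * (permMat σ)ᵀ * Matrix.diagonal d * permMat σ
      = permMat σ * ((matF (m+2))ᵀ * ((permMat σ)ᵀ * (Matrix.diagonal d * permMat σ))) by
    noncomm_ring]
  rw [← Matrix.mulVec_mulVec, ← Matrix.mulVec_mulVec, ← Matrix.mulVec_mulVec,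
    ← Matrix.mulVec_mulVec]
  rw [permMat_mulVec_single, Matrix.diagonal_mulVec_single, permMat_transpose_mulVec_single,
    show σ⁻¹ (σ 0) = 0 from σ.symm_apply_apply 0, mul_one, matF_transpose_mulVec_single, permMat_mulVec_single]

lemma sum_perm_two {m : ℕ} (f : Fin (m+2) → Fin (m+2) → ℝ) :
    ∑ σ : Equiv.Perm (Fin (m+2)), f (σ 0) (σ 1)
      = (m.factorial : ℝ) * ∑ p : Fin (m+2), ∑ q : Fin (m+1),
          f p ((Equiv.swap 0 p) q.succ) := by
  rw [← Equiv.sum_comp (Equiv.Perm.decomposeFin.symm)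
    (fun σ : Equiv.Perm (Fin (m+2)) => f (σ 0) (σ 1)), Fintype.sum_prod_type]
  rw [Finset.mul_sum]
  refine Finset.sum_congr rfl fun p _ => ?_
  simp only [Equiv.Perm.decomposeFin_symm_apply_zero, Equiv.Perm.decomposeFin_symm_apply_one]
  rw [← Equiv.sum_comp (Equiv.Perm.decomposeFin.symm)
    (fun τ : Equiv.Perm (Fin (m+1)) => f p (Equiv.swap 0 p (τ 0).succ)), Fintype.sum_prod_type]
  simp only [Equiv.Perm.decomposeFin_symm_apply_zero, Finset.sum_const, Finset.card_univ,
    Fintype.card_perm, nsmul_eq_mul, Finset.mul_sum]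
  simp

lemma sum_q {m : ℕ} (p i : Fin (m+2)) (c : ℝ) :
    ∑ q : Fin (m+1), (if i = (Equiv.swap 0 p) q.succ then c else 0)
      = if i = p then 0 else c := by
  by_cases hip : i = p
  · subst hip
    rw [if_pos rfl]
    refine Finset.sum_eq_zero fun q _ => ?_
    rw [if_neg]
    intro h
    rw [eq_comm, Equiv.swap_apply_eq_iff, Equiv.swap_apply_right] at h
    exact Fin.succ_ne_zero q h
  · rw [if_neg hip]
    have h0 : Equiv.swap (0 : Fin (m+2)) p i ≠ 0 := by
      intro h
      rw [Equiv.swap_apply_eq_iff, Equiv.swap_apply_left] at h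
      exact hip h
    rw [Finset.sum_eq_single_of_mem ((Equiv.swap (0 : Fin (m+2)) p i).pred h0)
      (Finset.mem_univ _) ?_]
    · rw [if_pos (by rw [Fin.succ_pred, Equiv.swap_apply_self])]
    · intro q _ hq
      rw [if_neg]
      intro h
      rw [eq_comm, Equiv.swap_apply_eq_iff] at h
      exact hq (Fin.succ_injective _ (by rw [h, Fin.succ_pred]))

theorem average_PFtPtDPe1 (n : ℕ) (hn : 2 ≤ n) (d : Fin n → ℝ)
    (dav : ℝ) (hdav : dav = (∑ i, d i) / n) :
    ((n.factorial : ℝ))⁻¹ •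
        ∑ σ : Equiv.Perm (Fin n),
          (permMat σ * (matF n)ᵀ * (permMat σ)ᵀ * Matrix.diagonal d * permMat σ).mulVec
            (Pi.single (⟨0, by omega⟩ : Fin n) 1)
      = ((n : ℝ) - 1)⁻¹ • (dav • (fun _ => 1 : Fin n → ℝ) - ((n : ℝ))⁻¹ • d) := by
  obtain ⟨m, rfl⟩ : ∃ m, n = m + 2 := ⟨n - 2, by omega⟩
  have hterm : ∀ σ : Equiv.Perm (Fin (m+2)),
      (permMat σ * (matF (m+2))ᵀ * (permMat σ)ᵀ * Matrix.diagonal d * permMat σ).mulVec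
        (Pi.single (⟨0, by omega⟩ : Fin (m+2)) 1) = Pi.single (σ 1) (d (σ 0)) := by
    intro σ
    rw [show (⟨0, by omega⟩ : Fin (m+2)) = 0 from rfl]
    exact term_eq d σ
  simp only [hterm]
  funext i
  simp only [Pi.smul_apply, Finset.sum_apply, smul_eq_mul, Pi.sub_apply, Pi.single_apply]
  rw [sum_perm_two (fun a b => if i = b then d a else 0)]
  simp only [sum_q]
  have hsum : ∑ p, (if i = p then (0:ℝ) else d p) = (∑ p, d p) - d i := by
    have h : ∀ p : Fin (m+2), (if i = p then (0:ℝ) else d p)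
        = d p - (if i = p then d p else 0) := by
      intro p; split <;> simp [*]
    simp [h, Finset.sum_sub_distrib, Finset.sum_ite_eq]
  rw [hsum, hdav]
  have h1 : ((m+2).factorial : ℝ) = ((m:ℝ)+2) * (((m:ℝ)+1) * m.factorial) := by
    rw [show m + 2 = (m+1) + 1 from rfl, Nat.factorial_succ, Nat.factorial_succ]
    push_cast; ring
  have hm : (m.factorial : ℝ) ≠ 0 := Nat.cast_ne_zero.mpr (Nat.factorial_ne_zero m)
  have h2 : ((m:ℝ)+2) ≠ 0 := by positivity
  have h3 : ((m:ℝ)+1) ≠ 0 := by positivity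
  rw [h1]
  push_cast
  have h4 : ((m:ℝ) + 2 - 1) = (m:ℝ) + 1 := by ring
  rw [h4]
  field_simp
end

section
/- Let n ≥ 1, let δ ∈ ℝ, and let E be the n×n matrix with E_{ij} = 1 for i > j and E_{ij} = 0 otherwise. Then I + (1−δ)E is invertible, and the matrix L̄ := −(I + (1−δ)E)^{−1} has entries L̄_{ij} = −1 if i = j, L̄_{ij} = (1−δ)·δ^{i−j−1} if i > j, and L̄_{ij} = 0 if i < j. -/
open Matrix

/-- The strictly lower triangular matrix of all ones below the diagonal. -/
def matE (n : ℕ) : Matrix (Fin n) (Fin n) ℝ :=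
  Matrix.of fun i j => if (j : ℕ) < (i : ℕ) then 1 else 0

theorem Lbar_entries (n : ℕ) (hn : 1 ≤ n) (δ : ℝ) :
    IsUnit ((1 : Matrix (Fin n) (Fin n) ℝ) + (1 - δ) • matE n) ∧
    ∀ i j : Fin n,
      (-((1 : Matrix (Fin n) (Fin n) ℝ) + (1 - δ) • matE n)⁻¹) i j =
        if i = j then -1
        else if (j : ℕ) < (i : ℕ) then (1 - δ) * δ ^ ((i : ℕ) - (j : ℕ) - 1)
        else 0 := by
  set A := (1 : Matrix (Fin n) (Fin n) ℝ) + (1 - δ) • matE n with hAdef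
  set b : ℕ → ℕ → ℝ := fun a c =>
    if a = c then 1 else if c < a then -((1 - δ) * δ ^ (a - c - 1)) else 0 with hbdef
  set B : Matrix (Fin n) (Fin n) ℝ := Matrix.of fun i j => b i j with hBdef
  -- key scalar identity
  have hkey : ∀ I J : ℕ,
      b I J + (1 - δ) * ∑ m ∈ Finset.range I, b m J = if I = J then 1 else 0 := by
    intro I J
    rcases lt_trichotomy I J with h | h | h
    · have hb : b I J = 0 := by
        simp only [hbdef]; rw [if_neg (by omega), if_neg (by omega)]
      have hS : ∑ m ∈ Finset.range I, b m J = 0 := by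
        apply Finset.sum_eq_zero
        intro m hm
        rw [Finset.mem_range] at hm
        simp only [hbdef]; rw [if_neg (by omega), if_neg (by omega)]
      rw [hb, hS, if_neg (by omega)]; ring
    · subst h
      have hb : b I I = 1 := by simp [hbdef]
      have hS : ∑ m ∈ Finset.range I, b m I = 0 := by
        apply Finset.sum_eq_zero
        intro m hm
        rw [Finset.mem_range] at hm
        simp only [hbdef]; rw [if_neg (by omega), if_neg (by omega)]
      rw [hb, hS, if_pos rfl]; ring
    · -- J < I
      set N := I - J - 1 with hN
      have hb : b I J = -((1 - δ) * δ ^ N) := by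
        simp only [hbdef]; rw [if_neg (by omega), if_pos h]
      have hS : ∑ m ∈ Finset.range I, b m J = δ ^ N := by
        rw [Finset.range_eq_Ico,
          ← Finset.sum_Ico_consecutive _ (Nat.zero_le (J + 1)) (by omega : J + 1 ≤ I)]
        have h1 : ∑ m ∈ Finset.Ico 0 (J + 1), b m J = 1 := by
          rw [← Finset.range_eq_Ico, Finset.sum_range_succ]
          have : ∑ m ∈ Finset.range J, b m J = 0 := by
            apply Finset.sum_eq_zero
            intro m hm
            rw [Finset.mem_range] at hm
            simp only [hbdef]; rw [if_neg (by omega), if_neg (by omega)]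
          rw [this]; simp [hbdef]
        have h2 : ∑ m ∈ Finset.Ico (J + 1) I, b m J = δ ^ N - 1 := by
          rw [Finset.sum_Ico_eq_sum_range]
          have heq : ∀ t ∈ Finset.range (I - (J + 1)),
              b (J + 1 + t) J = -((1 - δ) * δ ^ t) := by
            intro t _
            simp only [hbdef]; rw [if_neg (by omega), if_pos (by omega)]
            have ht : J + 1 + t - J - 1 = t := by omega
            rw [ht]
          rw [Finset.sum_congr rfl heq]
          have hIN : I - (J + 1) = N := by omega
          rw [hIN]
          have hg := geom_sum_mul δ N
          have : ∑ t ∈ Finset.range N, -((1 - δ) * δ ^ t)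
              = -((1 - δ) * ∑ t ∈ Finset.range N, δ ^ t) := by
            rw [Finset.mul_sum, ← Finset.sum_neg_distrib]
          rw [this]
          nlinarith [hg]
        rw [h1, h2]; ring
      rw [hb, hS, if_neg (by omega : ¬ I = J)]; ring
  have hAB : A * B = 1 := by
    ext i j
    have h1 : ∀ k : Fin n, A i k * B k j =
        (if i = k then b k j else 0) + (if (k : ℕ) < (i : ℕ) then (1 - δ) * b k j else 0) := by
      intro k
      simp only [hAdef, hBdef, Matrix.add_apply, Matrix.one_apply, Matrix.smul_apply,
        matE, Matrix.of_apply, smul_eq_mul]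
      by_cases h : i = k
      · have h' : ¬ (k : ℕ) < (i : ℕ) := by subst h; omega
        rw [if_pos h, if_neg h', if_pos h, if_neg h']; ring
      · rw [if_neg h, if_neg h]
        by_cases h' : (k : ℕ) < (i : ℕ)
        · rw [if_pos h', if_pos h']; ring
        · rw [if_neg h', if_neg h']; ring
    rw [Matrix.mul_apply, Finset.sum_congr rfl fun k _ => h1 k, Finset.sum_add_distrib,
      Finset.sum_ite_eq, if_pos (Finset.mem_univ i)]
    have h2 : ∑ k : Fin n, (if (k : ℕ) < (i : ℕ) then (1 - δ) * b k j else 0)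
        = (1 - δ) * ∑ m ∈ Finset.range (i : ℕ), b m (j : ℕ) := by
      rw [Fin.sum_univ_eq_sum_range (fun m => if m < (i : ℕ) then (1 - δ) * b m (j : ℕ) else 0)]
      rw [← Finset.sum_subset (Finset.range_subset_range.2 i.isLt.le)
        (fun m _ hm => by rw [if_neg (by simpa [Finset.mem_range] using hm)])]
      rw [Finset.mul_sum]
      exact Finset.sum_congr rfl fun m hm => by
        rw [if_pos (Finset.mem_range.mp hm)]
    rw [h2, hkey (i : ℕ) (j : ℕ), Matrix.one_apply]
    by_cases h : i = j
    · rw [if_pos h, if_pos (by rw [h])]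
    · rw [if_neg h, if_neg (fun hh => h (Fin.ext hh))]
  have hBA : B * A = 1 := mul_eq_one_comm.mp hAB
  have hInv : A⁻¹ = B := Matrix.inv_eq_right_inv hAB
  refine ⟨⟨⟨A, B, hAB, hBA⟩, rfl⟩, ?_⟩
  intro i j
  rw [Matrix.neg_apply, hInv, hBdef]
  show -(b (i : ℕ) (j : ℕ)) = _
  simp only [hbdef]
  by_cases h : i = j
  · simp [h]
  · rw [if_neg h, if_neg (fun hh => h (Fin.ext hh))]
    by_cases h' : (j : ℕ) < (i : ℕ)
    · rw [if_pos h', if_pos h']; ring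
    · rw [if_neg h', if_neg h']; ring
end

section
/- Let n ≥ 1, let δ ∈ ℝ, let E be the n×n matrix with E_{ij} = 1 for i > j and E_{ij} = 0 otherwise, and let L̄ := −(I + (1−δ)E)^{−1}. Then the entries of L̄E^T are given by (L̄E^T)_{ij} = −δ^{i−1} for i < j and (L̄E^T)_{ij} = δ^{i−j} − δ^{i−1} for i ≥ j. -/
open Matrix Finset

theorem LbarEt_entries (n : ℕ) (hn : 1 ≤ n) (δ : ℝ) :
    ∀ i j : Fin n,
      ((-((1 : Matrix (Fin n) (Fin n) ℝ) + (1 - δ) • matE n)⁻¹) * (matE n)ᵀ) i j =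
        if (i : ℕ) < (j : ℕ) then -δ ^ (i : ℕ)
        else δ ^ ((i : ℕ) - (j : ℕ)) - δ ^ (i : ℕ) := by
  classical
  set A : Matrix (Fin n) (Fin n) ℝ := (1 : Matrix (Fin n) (Fin n) ℝ) + (1 - δ) • matE n with hA
  set C : Matrix (Fin n) (Fin n) ℝ := Matrix.of (fun i j =>
    if (i : ℕ) < (j : ℕ) then -δ ^ (i : ℕ)
    else δ ^ ((i : ℕ) - (j : ℕ)) - δ ^ (i : ℕ)) with hC
  have key : A * (-C) = (matE n)ᵀ := by
    ext i j
    set g : ℕ → ℝ := fun m =>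
      if m < (j : ℕ) then -δ ^ m else δ ^ (m - (j : ℕ)) - δ ^ m with hg
    have hCg : ∀ k : Fin n, C k j = g (k : ℕ) := fun k => rfl
    have hFsum : (A * (-C)) i j =
        ∑ m ∈ range n, ((if m = (i : ℕ) then -(g m) else 0)
          + (1 - δ) * (if m < (i : ℕ) then -(g m) else 0)) := by
      rw [Matrix.mul_apply, ← Fin.sum_univ_eq_sum_range]
      refine Finset.sum_congr rfl fun k _ => ?_
      have : A i k = (if (k : ℕ) = (i : ℕ) then 1 else 0)
          + (1 - δ) * (if (k : ℕ) < (i : ℕ) then 1 else 0) := by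
        simp [hA, matE, Matrix.one_apply, Matrix.add_apply, Matrix.smul_apply,
          smul_eq_mul, Fin.ext_iff, eq_comm]
      rw [this, Matrix.neg_apply, hCg]
      split_ifs <;> ring
    have h1 : ∑ m ∈ range n, (if m = (i : ℕ) then -(g m) else 0) = -(g i) := by
      rw [Finset.sum_ite_eq' (range n) (i : ℕ) (fun m => -(g m))]
      simp [i.isLt]
    have h2 : ∑ m ∈ range n, (if m < (i : ℕ) then -(g m) else 0)
        = -(∑ m ∈ range (i : ℕ), g m) := by
      rw [← Finset.sum_subset (Finset.range_subset_range.2 i.isLt.le)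
        (fun x _ hx => by simp [Finset.mem_range.not.1 hx])]
      rw [← Finset.sum_neg_distrib]
      exact Finset.sum_congr rfl fun m hm => by simp [Finset.mem_range.1 hm]
    rw [hFsum, Finset.sum_add_distrib, ← Finset.mul_sum, h1, h2]
    have hRHS : (matE n)ᵀ i j = if (i : ℕ) < (j : ℕ) then 1 else 0 := rfl
    rw [hRHS]
    by_cases hij : (i : ℕ) < (j : ℕ)
    · have hgi : g (i : ℕ) = -δ ^ (i : ℕ) := if_pos hij
      have hsum : ∑ m ∈ range (i : ℕ), g m = -(∑ m ∈ range (i : ℕ), δ ^ m) := by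
        rw [← Finset.sum_neg_distrib]
        refine Finset.sum_congr rfl fun m hm => ?_
        exact if_pos ((Finset.mem_range.1 hm).trans hij)
      rw [hgi, hsum, if_pos hij]
      linear_combination -(geom_sum_mul δ (i : ℕ))
    · have hji : (j : ℕ) ≤ (i : ℕ) := Nat.le_of_not_lt hij
      have hgi : g (i : ℕ) = δ ^ ((i : ℕ) - (j : ℕ)) - δ ^ (i : ℕ) := if_neg hij
      have hsum : ∑ m ∈ range (i : ℕ), g m =
          ∑ m ∈ range ((i : ℕ) - (j : ℕ)), δ ^ m - ∑ m ∈ range (i : ℕ), δ ^ m := by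
        have e1 : ∑ m ∈ Finset.Ico 0 (j : ℕ), g m = -(∑ m ∈ Finset.Ico 0 (j : ℕ), δ ^ m) := by
          rw [← Finset.sum_neg_distrib]
          refine Finset.sum_congr rfl fun m hm => ?_
          exact if_pos (Finset.mem_Ico.1 hm).2
        have e2 : ∑ m ∈ Finset.Ico (j : ℕ) (i : ℕ), g m =
            ∑ m ∈ Finset.Ico (j : ℕ) (i : ℕ), (δ ^ (m - (j : ℕ)) - δ ^ m) := by
          refine Finset.sum_congr rfl fun m hm => ?_
          exact if_neg (Nat.not_lt.2 (Finset.mem_Ico.1 hm).1)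
        have esplit : ∑ m ∈ range (i : ℕ), g m
            = ∑ m ∈ Finset.Ico 0 (j : ℕ), g m + ∑ m ∈ Finset.Ico (j : ℕ) (i : ℕ), g m := by
          rw [Finset.range_eq_Ico, Finset.sum_Ico_consecutive _ (Nat.zero_le (j : ℕ)) hji]
        rw [esplit, e1, e2, Finset.sum_sub_distrib]
        have e3 : ∑ m ∈ Finset.Ico (j : ℕ) (i : ℕ), δ ^ (m - (j : ℕ))
            = ∑ m ∈ range ((i : ℕ) - (j : ℕ)), δ ^ m := by
          rw [Finset.sum_Ico_eq_sum_range]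
          exact Finset.sum_congr rfl fun m _ => by rw [Nat.add_sub_cancel_left]
        have e4 : ∑ m ∈ Finset.Ico 0 (j : ℕ), δ ^ m + ∑ m ∈ Finset.Ico (j : ℕ) (i : ℕ), δ ^ m
            = ∑ m ∈ range (i : ℕ), δ ^ m := by
          rw [Finset.range_eq_Ico, Finset.sum_Ico_consecutive _ (Nat.zero_le (j : ℕ)) hji]
        rw [e3]
        linarith [e4]
      rw [hgi, hsum, if_neg hij]
      linear_combination geom_sum_mul δ ((i : ℕ) - (j : ℕ)) - geom_sum_mul δ (i : ℕ)
  have hdet : A.det = 1 := by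
    have hbt : A.BlockTriangular OrderDual.toDual := by
      intro i j hij
      have h1 : i < j := hij
      have hval : (i : ℕ) < (j : ℕ) := h1
      have hne : i ≠ j := Fin.ne_of_lt h1
      have h2 : ¬ (j : ℕ) < (i : ℕ) := by omega
      simp [hA, matE, Matrix.one_apply, Matrix.add_apply, Matrix.smul_apply, hne, h2]
      exact fun hlt => absurd (Fin.lt_iff_val_lt_val.mp hlt) h2
    rw [Matrix.det_of_lowerTriangular A hbt]
    apply Finset.prod_eq_one
    intro i _
    simp [hA, matE, Matrix.one_apply, Matrix.add_apply, Matrix.smul_apply]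
  have hinv : Invertible A := A.invertibleOfIsUnitDet (by rw [hdet]; exact isUnit_one)
  have hfinal : (-A⁻¹) * (matE n)ᵀ = C := by
    rw [← key, neg_mul, Matrix.inv_mul_cancel_left_of_invertible, neg_neg]
  intro i j
  rw [hfinal]
  rfl
end

section
/- Let n ≥ 1 and let D be an n×n diagonal matrix with diagonal vector d := D𝟏 and d_av := 𝟏^T d / n. For a permutation matrix P write D_P := P^T D P. Then the average over all n! permutation matrices P satisfies (1/n!)·∑_{P} P (I − 𝟏 e₁^T) D_P (I − e₁ 𝟏^T) P^T = D − (1/n)·( 𝟏 d^T + d 𝟏^T ) + d_av·𝟏𝟏^T. -/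
open Matrix

lemma permMat_mul {n : ℕ} (σ : Equiv.Perm (Fin n)) (M : Matrix (Fin n) (Fin n) ℝ) :
    permMat σ * M = M.submatrix (⇑σ⁻¹) id := by
  ext i j
  rw [Matrix.mul_apply]
  rw [Finset.sum_eq_single (σ⁻¹ i)]
  · simp [permMat]
  · intro b _ hb
    simp only [permMat, Matrix.of_apply]
    rw [if_neg, zero_mul]
    intro h; exact hb (by simp [h])
  · simp

lemma mul_permMat {n : ℕ} (σ : Equiv.Perm (Fin n)) (M : Matrix (Fin n) (Fin n) ℝ) :
    M * permMat σ = M.submatrix id ⇑σ := by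
  ext i j
  simp [Matrix.mul_apply, permMat]

lemma permMat_transpose {n : ℕ} (σ : Equiv.Perm (Fin n)) :
    (permMat σ)ᵀ = permMat σ⁻¹ := by
  ext i j
  simp only [permMat, Matrix.transpose_apply, Matrix.of_apply]
  congr 1
  simp [eq_comm, Equiv.eq_symm_apply, Equiv.Perm.inv_def]


lemma Y_eq {m : ℕ} (σ : Equiv.Perm (Fin (m+1))) (d : Fin (m+1) → ℝ) :
    ((1 : Matrix (Fin (m+1)) (Fin (m+1)) ℝ) - Matrix.vecMulVec (fun _ => 1) (Pi.single 0 1)) *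
      Matrix.diagonal (fun k => d (σ k)) *
      ((1 : Matrix (Fin (m+1)) (Fin (m+1)) ℝ) - Matrix.vecMulVec (Pi.single 0 1) (fun _ => 1))
    = Matrix.of (fun a b => (if a = b then d (σ a) else 0) - (if a = 0 then d (σ 0) else 0)
        - (if b = 0 then d (σ 0) else 0) + d (σ 0)) := by
  ext a b
  rw [Matrix.mul_apply]
  simp only [Matrix.mul_diagonal, Matrix.sub_apply, Matrix.one_apply, Matrix.vecMulVec_apply,
    Pi.single_apply, one_mul, mul_one, sub_mul, mul_sub, ite_mul, mul_ite, one_mul, mul_one,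
    zero_mul, mul_zero, Finset.sum_sub_distrib, Finset.sum_ite_eq, Finset.sum_ite_eq',
    Finset.mem_univ, if_true, Matrix.of_apply]
  by_cases hab : a = b <;> by_cases ha : a = 0 <;> by_cases hb : b = 0 <;>
    simp [hab, ha, hb, eq_comm]

lemma sum_perm_comp {m : ℕ} (g : Fin (m+1) → ℝ) :
    ∑ σ : Equiv.Perm (Fin (m+1)), g (σ 0) = m.factorial * ∑ p, g p := by
  rw [← Equiv.sum_comp Equiv.Perm.decomposeFin.symm (fun σ => g (σ 0))]
  simp [Fintype.sum_prod_type, Finset.sum_const, Fintype.card_perm, Finset.mul_sum]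

lemma term_eq_s16 {m : ℕ} (σ : Equiv.Perm (Fin (m+1))) (d : Fin (m+1) → ℝ) :
    permMat σ *
        ((1 : Matrix (Fin (m+1)) (Fin (m+1)) ℝ) - Matrix.vecMulVec (fun _ => 1) (Pi.single 0 1)) *
        ((permMat σ)ᵀ * Matrix.diagonal d * permMat σ) *
        ((1 : Matrix (Fin (m+1)) (Fin (m+1)) ℝ) - Matrix.vecMulVec (Pi.single 0 1) (fun _ => 1)) *
        (permMat σ)ᵀ
    = Matrix.of (fun i j => (if i = j then d i else 0) - (if i = σ 0 then d (σ 0) else 0)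
        - (if j = σ 0 then d (σ 0) else 0) + d (σ 0)) := by
  have hD : (permMat σ)ᵀ * Matrix.diagonal d * permMat σ
      = Matrix.diagonal (fun k => d (σ k)) := by
    rw [permMat_transpose, permMat_mul, mul_permMat]
    ext a b
    by_cases h : a = b <;> simp [Matrix.diagonal_apply, Matrix.submatrix_apply, h, inv_inv]
  rw [hD, permMat_transpose,
    show ∀ A B C D E : Matrix (Fin (m+1)) (Fin (m+1)) ℝ,
      A * B * C * D * E = A * (B * C * D) * E from fun A B C D E => by
        simp only [Matrix.mul_assoc],
    Y_eq, permMat_mul, mul_permMat]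
  ext i j
  simp only [Matrix.submatrix_apply, Matrix.of_apply, id_eq, EmbeddingLike.apply_eq_iff_eq,
    (show ∀ x, σ⁻¹ (σ x) = x from fun x => Equiv.symm_apply_apply σ x),
    (show ∀ x, σ (σ⁻¹ x) = x from fun x => Equiv.apply_symm_apply σ x)]
  have h1 : (σ⁻¹ i = 0) = (i = σ 0) := by
    simp [Equiv.Perm.inv_def, Equiv.symm_apply_eq]
  have h2 : (σ⁻¹ j = 0) = (j = σ 0) := by
    simp [Equiv.Perm.inv_def, Equiv.symm_apply_eq]
  simp only [h1, h2, (show ∀ x, σ (σ⁻¹ x) = x from fun x => Equiv.apply_symm_apply σ x)]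

theorem average_D_term (n : ℕ) (hn : 1 ≤ n) (d : Fin n → ℝ)
    (dav : ℝ) (hdav : dav = (∑ i, d i) / n) :
    ((n.factorial : ℝ))⁻¹ •
        ∑ σ : Equiv.Perm (Fin n),
          permMat σ *
            ((1 : Matrix (Fin n) (Fin n) ℝ)
              - Matrix.vecMulVec (fun _ => 1) (Pi.single (⟨0, by omega⟩ : Fin n) 1)) *
            ((permMat σ)ᵀ * Matrix.diagonal d * permMat σ) *
            ((1 : Matrix (Fin n) (Fin n) ℝ)
              - Matrix.vecMulVec (Pi.single (⟨0, by omega⟩ : Fin n) 1) (fun _ => 1)) *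
            (permMat σ)ᵀ
      = Matrix.diagonal d
        - (1 / (n : ℝ)) • (Matrix.vecMulVec (fun _ => 1) d + Matrix.vecMulVec d (fun _ => 1))
        + dav • Matrix.vecMulVec (fun _ => 1) (fun _ => 1) := by
  obtain ⟨m, rfl⟩ : ∃ m, n = m + 1 := ⟨n - 1, by omega⟩
  have h0 : (⟨0, by omega⟩ : Fin (m+1)) = 0 := rfl
  rw [h0]
  have hterm : ∀ σ : Equiv.Perm (Fin (m+1)),
      permMat σ *
        ((1 : Matrix (Fin (m+1)) (Fin (m+1)) ℝ) - Matrix.vecMulVec (fun _ => 1) (Pi.single 0 1)) *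
        ((permMat σ)ᵀ * Matrix.diagonal d * permMat σ) *
        ((1 : Matrix (Fin (m+1)) (Fin (m+1)) ℝ) - Matrix.vecMulVec (Pi.single 0 1) (fun _ => 1)) *
        (permMat σ)ᵀ
      = Matrix.of (fun i j => (if i = j then d i else 0) - (if i = σ 0 then d (σ 0) else 0)
          - (if j = σ 0 then d (σ 0) else 0) + d (σ 0)) := fun σ => term_eq_s16 σ d
  simp only [hterm]
  ext i j
  simp only [Matrix.smul_apply, Matrix.sum_apply, Matrix.of_apply, Matrix.add_apply,
    Matrix.sub_apply, Matrix.diagonal_apply, Matrix.vecMulVec_apply, smul_eq_mul, one_mul, mul_one]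
  rw [Finset.sum_add_distrib, Finset.sum_sub_distrib, Finset.sum_sub_distrib]
  have e1 : ∑ _σ : Equiv.Perm (Fin (m+1)), (if i = j then d i else 0)
      = ((m+1).factorial : ℝ) * (if i = j then d i else 0) := by
    simp [Finset.sum_const, Finset.card_univ, Fintype.card_perm, nsmul_eq_mul]
  have e2 : ∑ σ : Equiv.Perm (Fin (m+1)), (if i = σ 0 then d (σ 0) else 0)
      = (m.factorial : ℝ) * d i := by
    rw [sum_perm_comp (fun p => if i = p then d p else 0)]
    simp [Finset.sum_ite_eq]
  have e3 : ∑ σ : Equiv.Perm (Fin (m+1)), (if j = σ 0 then d (σ 0) else 0)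
      = (m.factorial : ℝ) * d j := by
    rw [sum_perm_comp (fun p => if j = p then d p else 0)]
    simp [Finset.sum_ite_eq]
  have e4 : ∑ σ : Equiv.Perm (Fin (m+1)), d (σ 0)
      = (m.factorial : ℝ) * ∑ p, d p := sum_perm_comp d
  rw [e1, e2, e3, e4, hdav]
  have hfac : ((m+1).factorial : ℝ) = (m+1) * m.factorial := by
    push_cast [Nat.factorial_succ]; ring
  have hm : (m.factorial : ℝ) ≠ 0 := Nat.cast_ne_zero.mpr m.factorial_ne_zero
  have hn1 : ((m : ℝ) + 1) ≠ 0 := by positivity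
  rw [hfac]
  push_cast
  by_cases hij : i = j <;> simp only [hij, if_true, if_false] <;> field_simp <;> ring
end
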